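/- Let D ≥ 9 be an integer, set p = 1/√D, and let N be a positive integer such that M := 2·N·p is a positive integer. Let L_1,…,L_M be mutually independent random variables taking values in the nonnegative integers such that for every i: Pr[L_i = k] = (1−p)^k for every integer k ≥ D, and Pr[1 ≤ L_i ≤ D−1] = 0 (so Pr[L_i = 0] = 1 − (1−p)^D/p). Let L = L_1 + … + L_M. Then Pr[L ≥ 8·N·D·(1−p)^D] ≤ 2·e^{−2·N·(1−p)^{D}/3}. -/

import Mathlib

open MeasureTheory ProbabilityTheory Real

lemma tsum_meas_singleton (ν : Measure ℕ) [IsProbabilityMeasure ν] :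
    ∑' k : ℕ, ν {k} = 1 := by
  rw [← measure_univ (μ := ν), ← Set.iUnion_of_singleton ℕ,
    measure_iUnion (fun i j hij => Set.disjoint_singleton.mpr hij)
      (fun k => measurableSet_singleton k)]

lemma key_mgf_bound {Ω : Type*} [MeasureSpace Ω] [IsProbabilityMeasure (volume : Measure Ω)]
    (D : ℕ) (t x r : ℝ) (ht0 : 0 ≤ t) (htD : t * D ≤ 1)
    (hx0 : 0 ≤ x) (hr0 : 0 ≤ r) (hr1 : r < 1)
    (hxr : ∀ k : ℕ, x ^ k * Real.exp (t * k) = r ^ k)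
    (Li : Ω → ℕ) (hLm : Measurable Li)
    (hgeom : ∀ k, D ≤ k → (volume {ω | Li ω = k}).toReal = x ^ k)
    (hzero : ∀ k, 1 ≤ k → k < D → volume {ω | Li ω = k} = 0) :
    Integrable (fun ω => Real.exp (t * (Li ω : ℝ))) volume ∧
      mgf (fun ω => (Li ω : ℝ)) volume t ≤ 1 + r ^ D / (1 - r) := by
  set μ := (volume : Measure Ω)
  set ν := Measure.map Li μ with hνdef
  have hνP : IsProbabilityMeasure ν := Measure.isProbabilityMeasure_map hLm.aemeasurable
  have hν : ∀ k : ℕ, ν {k} = μ {ω | Li ω = k} := by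
    intro k
    rw [hνdef, Measure.map_apply hLm (measurableSet_singleton k)]
    rfl
  have hνk : ∀ k, D ≤ k → ν {k} = ENNReal.ofReal (x ^ k) := by
    intro k hk
    rw [hν k, ← hgeom k hk, ENNReal.ofReal_toReal (measure_ne_top _ _)]
  set g : ℕ → ℝ := fun k => Real.exp (t * k) with hgdef
  have hgm : Measurable g := measurable_from_top
  have htk : ∀ k : ℕ, k < D → t * k ≤ 1 := by
    intro k hk
    refine le_trans ?_ htD
    exact mul_le_mul_of_nonneg_left (by exact_mod_cast Nat.cast_le.mpr hk.le) ht0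
  -- integrability of g wrt ν
  have hint : Integrable g ν := by
    refine ⟨hgm.aestronglyMeasurable, ?_⟩
    have hl : ∫⁻ k, ‖g k‖ₑ ∂ν = ∑' k : ℕ, ‖g k‖ₑ * ν {k} :=
      lintegral_countable' _
    rw [HasFiniteIntegral, hl]
    have hterm : ∀ k : ℕ, ‖g k‖ₑ * ν {k}
        ≤ ENNReal.ofReal (Real.exp 1) * ν {k} + ENNReal.ofReal (r ^ k) := by
      intro k
      rw [Real.enorm_eq_ofReal (Real.exp_pos _).le]
      by_cases hk : k < D
      · refine le_trans ?_ (le_add_right le_rfl)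
        exact mul_le_mul_left (ENNReal.ofReal_le_ofReal (Real.exp_le_exp.mpr (htk k hk))) _
      · push_neg at hk
        rw [hνk k hk, ← ENNReal.ofReal_mul (Real.exp_pos _).le]
        refine le_trans (le_of_eq ?_) le_add_self
        rw [mul_comm, hxr k]
    refine lt_of_le_of_lt (ENNReal.tsum_le_tsum hterm) ?_
    rw [ENNReal.tsum_add, ENNReal.tsum_mul_left, tsum_meas_singleton ν, mul_one]
    have : ∑' k : ℕ, ENNReal.ofReal (r ^ k) = ∑' k : ℕ, (ENNReal.ofReal r) ^ k := by
      congr 1; funext k; rw [← ENNReal.ofReal_pow hr0]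
    rw [this, ENNReal.tsum_geometric]
    refine ENNReal.add_lt_top.mpr ⟨ENNReal.ofReal_lt_top, ENNReal.inv_lt_top.mpr ?_⟩
    rw [tsub_pos_iff_lt]
    exact ENNReal.ofReal_lt_one.mpr hr1
  have hint' : Integrable (fun ω => Real.exp (t * (Li ω : ℝ))) μ :=
    (integrable_map_measure hgm.aestronglyMeasurable hLm.aemeasurable).mp hint
  refine ⟨hint', ?_⟩
  -- mgf as a sum
  have hmgf : mgf (fun ω => (Li ω : ℝ)) μ t = ∑' k : ℕ, (ν {k}).toReal * g k := by
    rw [mgf]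
    have : ∫ ω, Real.exp (t * (Li ω : ℝ)) ∂μ = ∫ k, g k ∂ν :=
      (integral_map hLm.aemeasurable hgm.aestronglyMeasurable).symm
    rw [this, integral_countable' hint]
    simp [smul_eq_mul]
    rfl
  rw [hmgf]
  set a : ℕ → ℝ := fun k => (ν {k}).toReal with hadef
  have ha0 : ∀ k, 0 ≤ a k := fun k => ENNReal.toReal_nonneg
  have haS : Summable a :=
    ENNReal.summable_toReal (by rw [tsum_meas_singleton ν]; exact ENNReal.one_ne_top)
  have haT : ∑' k, a k = 1 := by
    rw [hadef, ← ENNReal.tsum_toReal_eq (fun k => measure_ne_top _ _),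
      tsum_meas_singleton ν, ENNReal.toReal_one]
  set d : ℕ → ℝ := fun k => if k < D then (0:ℝ) else r ^ k with hddef
  have hd0 : ∀ k, 0 ≤ d k := by
    intro k; rw [hddef]; dsimp only
    split
    · exact le_rfl
    · exact pow_nonneg hr0 k
  have hdle : ∀ k, d k ≤ r ^ k := by
    intro k; rw [hddef]; dsimp only
    split
    · exact pow_nonneg hr0 k
    · exact le_rfl
  have hdS : Summable d :=
    Summable.of_nonneg_of_le hd0 hdle (summable_geometric_of_lt_one hr0 hr1)
  have hdT : ∑' k, d k = r ^ D / (1 - r) := by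
    have := Summable.sum_add_tsum_nat_add (f := d) D hdS
    have h2 : ∑ i ∈ Finset.range D, d i = 0 := by
      refine Finset.sum_eq_zero fun i hi => ?_
      rw [hddef]; exact if_pos (Finset.mem_range.mp hi)
    have h3 : ∀ i : ℕ, d (i + D) = r ^ i * r ^ D := by
      intro i
      rw [hddef]; dsimp only
      rw [if_neg (by omega), pow_add]
    rw [h2, zero_add] at this
    rw [← this]
    simp_rw [h3]
    rw [tsum_mul_right, tsum_geometric_of_lt_one hr0 hr1, div_eq_mul_inv, mul_comm]
  set c : ℕ → ℝ := fun k => a k * (Real.exp (t * k) - 1) with hcdef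
  have hc0 : ∀ k, 0 ≤ c k := by
    intro k
    exact mul_nonneg (ha0 k)
      (sub_nonneg.mpr (Real.one_le_exp (mul_nonneg ht0 (Nat.cast_nonneg k))))
  have hcd : ∀ k, c k ≤ d k := by
    intro k
    rcases Nat.lt_or_ge k D with hk | hk
    · have hdk : d k = 0 := if_pos hk
      rw [hdk]
      rcases Nat.eq_zero_or_pos k with rfl | hk1
      · simp [hcdef]
      · have : a k = 0 := by
          rw [hadef]; dsimp only
          rw [hν k, hzero k hk1 hk, ENNReal.toReal_zero]
        rw [hcdef]; dsimp only; rw [this, zero_mul]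
    · have hak : a k = x ^ k := by rw [hadef]; dsimp only; rw [hν k]; exact hgeom k hk
      have hdk : d k = r ^ k := if_neg (Nat.not_lt.mpr hk)
      rw [hcdef, hdk]; dsimp only
      rw [hak, ← hxr k]
      have : x ^ k * (Real.exp (t * k) - 1) ≤ x ^ k * Real.exp (t * k) :=
        mul_le_mul_of_nonneg_left (by linarith [Real.exp_pos (t * k)]) (pow_nonneg hx0 k)
      linarith
  have hcS : Summable c := Summable.of_nonneg_of_le hc0 hcd hdS
  have hsplit : ∀ k, a k * g k = a k + c k := by
    intro k; rw [hgdef, hcdef]; dsimp only; ring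
  calc ∑' k, a k * g k = ∑' k, (a k + c k) := by simp_rw [hsplit]
    _ = (∑' k, a k) + ∑' k, c k := Summable.tsum_add haS hcS
    _ ≤ 1 + r ^ D / (1 - r) := by
        rw [haT]
        gcongr
        rw [← hdT]
        exact Summable.tsum_le_tsum hcd hcS hdS


set_option maxHeartbeats 2000000 in
theorem long_paths_total_length_bound
    {Ω : Type*} [MeasureSpace Ω] [IsProbabilityMeasure (volume : Measure Ω)]
    (D : ℕ) (hD : 9 ≤ D) (p : ℝ) (hp : p = 1 / Real.sqrt D)
    (N m : ℕ) (hN : 0 < N) (hm : 0 < m) (hmval : (m : ℝ) = 2 * (N : ℝ) * p)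
    (L : Fin m → Ω → ℕ) (hmeas : ∀ i, Measurable (L i))
    (hindep : ProbabilityTheory.iIndepFun L volume)
    (hgeom : ∀ i, ∀ k : ℕ, D ≤ k → (volume {ω | L i ω = k}).toReal = (1 - p) ^ k)
    (hzero : ∀ i, ∀ k : ℕ, 1 ≤ k → k < D → volume {ω | L i ω = k} = 0) :
    (volume {ω | 8 * (N : ℝ) * (D : ℝ) * (1 - p) ^ D ≤ ∑ i, (L i ω : ℝ)}).toReal ≤
      2 * Real.exp (-(2 * (N : ℝ) * (1 - p) ^ D / 3)) := by
  -- basic real facts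
  set s : ℝ := Real.sqrt D with hsdef
  have hD9 : (9:ℝ) ≤ (D:ℝ) := by exact_mod_cast hD
  have hDpos : (0:ℝ) < (D:ℝ) := by linarith
  have hs3 : 3 ≤ s := by
    rw [hsdef, show (3:ℝ) = Real.sqrt 9 by
      rw [show (9:ℝ) = 3^2 by norm_num, Real.sqrt_sq (by norm_num)]]
    exact Real.sqrt_le_sqrt hD9
  have hs0 : 0 < s := by linarith
  have hDs : (D:ℝ) = s ^ 2 := (Real.sq_sqrt hDpos.le).symm
  have hp0 : 0 < p := by rw [hp]; positivity
  have hps : p * s = 1 := by rw [hp]; field_simp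
  have hp3 : p ≤ 1/3 := by
    rw [hp]
    rw [div_le_div_iff₀ hs0 (by norm_num)]
    linarith
  set t : ℝ := 1 / (D:ℝ) with htdef
  have ht0 : 0 ≤ t := by positivity
  have htD : t * (D:ℝ) = 1 := by rw [htdef]; field_simp
  have ht1 : t < 1 := by
    rw [htdef]
    rw [div_lt_one hDpos]; linarith
  set x : ℝ := 1 - p with hxdef
  have hx0 : 0 ≤ x := by rw [hxdef]; linarith
  set q : ℝ := x ^ D with hqdef
  have hq0 : 0 ≤ q := pow_nonneg hx0 D
  set r : ℝ := x * Real.exp t with hrdef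
  have hr0 : 0 ≤ r := mul_nonneg hx0 (Real.exp_pos _).le
  have hxr : ∀ k : ℕ, x ^ k * Real.exp (t * k) = r ^ k := by
    intro k
    rw [hrdef, mul_pow, ← Real.exp_nat_mul, mul_comm (k:ℝ) t]
  have het : Real.exp t ≤ (1 - t)⁻¹ := by
    have h2 : 0 < 1 - t := by linarith
    have h1 : 1 - t ≤ (Real.exp t)⁻¹ := by
      rw [← Real.exp_neg]; linarith [Real.add_one_le_exp (-t)]
    rw [show Real.exp t = ((Real.exp t)⁻¹)⁻¹ from (inv_inv _).symm]
    exact inv_anti₀ h2 h1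
  have hts : t = 1 / s^2 := by rw [htdef, hDs]
  have hr_le : r ≤ s / (s + 1) := by
    have h2 : 0 < 1 - t := by linarith
    have hx1 : x ≤ 1 := by rw [hxdef]; linarith
    calc r = x * Real.exp t := hrdef
      _ ≤ x * (1 - t)⁻¹ := by
          exact mul_le_mul_of_nonneg_left het hx0
      _ = s / (s + 1) := by
          have hne : (1:ℝ) - 1/s^2 ≠ 0 := by
            have h9 : (1:ℝ)/s^2 < 1 := by
              rw [div_lt_one (by positivity)]; nlinarith
            exact ne_of_gt (by linarith)
          have hne2 : -s + s^3 ≠ 0 := by nlinarith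
          have hic : (-s + s^3)⁻¹ * (-s + s^3) = 1 := inv_mul_cancel₀ hne2
          rw [hxdef, hp, hts]
          field_simp
          rw [div_eq_one_iff_eq (by nlinarith)]; ring
  have h1r : 3 / (4 * s) ≤ 1 - r := by
    have h1 : 1 - s / (s+1) = 1 / (s+1) := by field_simp; ring
    have h2 : 3 / (4 * s) ≤ 1 / (s + 1) := by
      rw [div_le_div_iff₀ (by positivity) (by positivity)]
      nlinarith
    linarith [hr_le, h2]
  have h1r0 : 0 < 1 - r := lt_of_lt_of_le (by positivity) h1r
  have hr1 : r < 1 := by linarith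
  have hrD : r ^ D = q * Real.exp 1 := by
    rw [hrdef, mul_pow, hqdef, ← Real.exp_nat_mul]
    rw [show (D:ℝ) * t = 1 from by rw [mul_comm]; exact htD]
  -- probability part
  set Xi : Fin m → Ω → ℝ := fun i ω => (L i ω : ℝ) with hXidef
  have hXm : ∀ i, Measurable (Xi i) := fun i => measurable_from_top.comp (hmeas i)
  have hindep' : iIndepFun Xi volume := by
    have := hindep.comp (fun _ => (Nat.cast : ℕ → ℝ)) (fun _ => measurable_from_top)
    exact this
  have hkey : ∀ i, Integrable (fun ω => Real.exp (t * (Xi i ω))) volume ∧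
      mgf (Xi i) volume t ≤ 1 + r ^ D / (1 - r) := fun i =>
    key_mgf_bound D t x r ht0 (le_of_eq htD) hx0 hr0 hr1 hxr (L i) (hmeas i)
      (hgeom i) (hzero i)
  set ε : ℝ := 8 * (N:ℝ) * (D:ℝ) * q with hεdef
  have hIntSum : Integrable (fun ω => Real.exp (t * (∑ i, Xi i) ω)) volume :=
    hindep'.integrable_exp_mul_sum hXm (fun i _ => (hkey i).1)
  have hchern := measure_ge_le_exp_mul_mgf (μ := volume) (X := ∑ i, Xi i) ε ht0 hIntSum
  have hset : {ω | ε ≤ ∑ i, ((L i ω : ℝ))} = {ω | ε ≤ (∑ i, Xi i) ω} := by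
    ext ω
    simp only [Set.mem_setOf_eq, Finset.sum_apply, hXidef]
  rw [hset]
  set B : ℝ := 1 + r ^ D / (1 - r) with hBdef
  have hz0 : 0 ≤ r ^ D / (1 - r) := div_nonneg (pow_nonneg hr0 D) h1r0.le
  have hB0 : 0 ≤ B := by rw [hBdef]; linarith
  have hprod : mgf (∑ i, Xi i) volume t = ∏ i, mgf (Xi i) volume t :=
    hindep'.mgf_sum hXm Finset.univ
  have hBpow : ∏ i, mgf (Xi i) volume t ≤ B ^ m := by
    calc ∏ i, mgf (Xi i) volume t ≤ ∏ _i : Fin m, B :=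
          Finset.prod_le_prod (fun i _ => mgf_nonneg) (fun i _ => (hkey i).2)
      _ = B ^ m := by rw [Finset.prod_const, Finset.card_univ, Fintype.card_fin]
  have hz : r ^ D / (1 - r) ≤ 4/3 * Real.exp 1 * q * s := by
    have hd1 := div_le_div_of_nonneg_left
      (mul_nonneg hq0 (Real.exp_pos 1).le) (by positivity : (0:ℝ) < 3/(4*s)) h1r
    have heq : q * Real.exp 1 / (3/(4*s)) = 4/3 * Real.exp 1 * q * s := by
      field_simp
    rw [hrD]
    calc q * Real.exp 1 / (1 - r) ≤ q * Real.exp 1 / (3/(4*s)) := hd1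
      _ = 4/3 * Real.exp 1 * q * s := heq
  have hBexp : B ≤ Real.exp (4/3 * Real.exp 1 * q * s) := by
    have h1 := Real.add_one_le_exp (r ^ D / (1 - r))
    have h2 : Real.exp (r ^ D / (1 - r)) ≤ Real.exp (4/3 * Real.exp 1 * q * s) :=
      Real.exp_le_exp.mpr hz
    rw [hBdef]; linarith
  have hpow : B ^ m ≤ Real.exp ((m:ℝ) * (4/3 * Real.exp 1 * q * s)) := by
    calc B ^ m ≤ (Real.exp (4/3 * Real.exp 1 * q * s)) ^ m :=
          pow_le_pow_left₀ hB0 hBexp m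
      _ = Real.exp ((m:ℝ) * (4/3 * Real.exp 1 * q * s)) := (Real.exp_nat_mul _ m).symm
  have hms : (m:ℝ) * (4/3 * Real.exp 1 * q * s) = 8/3 * Real.exp 1 * (N:ℝ) * q := by
    rw [hmval]
    linear_combination (8/3 * Real.exp 1 * (N:ℝ) * q) * hps
  have htε : t * ε = 8 * (N:ℝ) * q := by
    rw [hεdef]
    linear_combination (8 * (N:ℝ) * q) * htD
  have hNq : 0 ≤ (N:ℝ) * q := mul_nonneg (Nat.cast_nonneg N) hq0
  have hfin : Real.exp (-(t * ε)) * Real.exp ((m:ℝ) * (4/3 * Real.exp 1 * q * s))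
      ≤ Real.exp (-(2 * (N:ℝ) * q / 3)) := by
    rw [← Real.exp_add, Real.exp_le_exp, htε, hms]
    have he := mul_le_mul_of_nonneg_left Real.exp_one_lt_d9.le hNq
    linarith [hNq, he]
  calc (volume {ω | ε ≤ (∑ i, Xi i) ω}).toReal
      ≤ Real.exp (-t * ε) * mgf (∑ i, Xi i) volume t := hchern
    _ ≤ Real.exp (-t * ε) * (B ^ m) := by
        rw [hprod]
        exact mul_le_mul_of_nonneg_left hBpow (Real.exp_pos _).le
    _ ≤ Real.exp (-(t * ε)) * Real.exp ((m:ℝ) * (4/3 * Real.exp 1 * q * s)) := by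
        rw [neg_mul]
        exact mul_le_mul_of_nonneg_left hpow (Real.exp_pos _).le
    _ ≤ Real.exp (-(2 * (N:ℝ) * q / 3)) := hfin
    _ ≤ 2 * Real.exp (-(2 * (N:ℝ) * q / 3)) := by
        linarith [Real.exp_pos (-(2 * (N:ℝ) * q / 3))]
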